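/- arXiv:1809.03939 — 4 statements merged into one kernel-verified Lean document; each statement's English description precedes it below -/
import Mathlib

section
/- Consider the heat subsystem of the two-site system with constant boiler heat inputs. Define the set I_h := { x_h ∈ ℝ³ : f_h1(x_h) = 0 and f_h2(x_h) = 0 }, where f_h1 and f_h2 are the right-hand sides of the x_h1- and x_h2-equations. Then I_h is invariant under the flow: every solution x_h : J → ℝ³ of the heat subsystem ODE, defined on an interval J containing 0 and with x_h(0) ∈ I_h, satisfies x_h(t) ∈ I_h for every t ∈ J. -/
/-!
Heat subsystem of the two-site system with constant boiler heat inputs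
(Lemma 1 of the paper): the set `I_h = {f_h1 = f_h2 = 0}` is invariant
under the flow of the heat subsystem ODE.
-/

open Set

lemma hasDerivAt_mul_abs (x : ℝ) : HasDerivAt (fun u : ℝ => u * |u|) (2 * |x|) x := by
  rcases lt_trichotomy x 0 with hx | hx | hx
  · have hev : (fun u : ℝ => -(u * u)) =ᶠ[nhds x] fun u : ℝ => u * |u| := by
      filter_upwards [Iio_mem_nhds hx] with u hu
      rw [abs_of_neg hu]; ring
    have : HasDerivAt (fun u : ℝ => -(u * u)) (2 * |x|) x := by
      have := ((hasDerivAt_id x).mul (hasDerivAt_id x)).neg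
      refine this.congr_deriv ?_
      rw [abs_of_neg hx]; simp only [id]; ring
    exact this.congr_of_eventuallyEq hev.symm
  · subst hx
    rw [hasDerivAt_iff_tendsto_slope]
    have hev : (fun u : ℝ => |u|) =ᶠ[nhdsWithin 0 {(0:ℝ)}ᶜ] slope (fun u : ℝ => u * |u|) 0 := by
      filter_upwards [self_mem_nhdsWithin] with u hu
      have hu' : u ≠ 0 := hu
      simp [slope, hu']
    apply Filter.Tendsto.congr' hev
    have : Filter.Tendsto (fun u : ℝ => |u|) (nhds 0) (nhds (0:ℝ)) := by
      simpa using (continuous_abs.tendsto (0:ℝ))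
    simpa using this.mono_left nhdsWithin_le_nhds
  · have hev : (fun u : ℝ => u * u) =ᶠ[nhds x] fun u : ℝ => u * |u| := by
      filter_upwards [Ioi_mem_nhds hx] with u hu
      rw [abs_of_pos hu]
    have : HasDerivAt (fun u : ℝ => u * u) (2 * |x|) x := by
      have := (hasDerivAt_id x).mul (hasDerivAt_id x)
      refine this.congr_deriv ?_
      rw [abs_of_pos hx]; simp only [id]; ring
    exact this.congr_of_eventuallyEq hev.symm

noncomputable section

/-- Right-hand side of the `x_h1`-equation (depends only on `x_h2`). -/
def fh1 (Th1 Th2 rhos hc Qa1 Qa2 QL1 QL2 : ℝ) (xh2 : ℝ) : ℝ :=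
  (Qa1 - QL1 - ((Real.pi / 4) * hc * rhos) * xh2) / Th1
    - (Qa2 - QL2 + ((Real.pi / 4) * hc * rhos) * xh2) / Th2

/-- Right-hand side of the `x_h2`-equation (depends only on `x_h1, x_h2`). -/
def fh2 (Th3 rhos lam L d : ℝ) (xh1 xh2 : ℝ) : ℝ :=
  (xh1 / rhos - (lam * L / (2 * d)) * xh2 * |xh2|) / Th3

/-- Every solution of the heat subsystem starting (at time `0`)
in `I_h = { x_h : f_h1(x_h) = 0 ∧ f_h2(x_h) = 0 }` remains in `I_h` for all
times in its interval of definition. -/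
theorem heat_subsystem_invariant_manifold
    (Th1 Th2 Th3 rhos lam L d hc : ℝ)
    (hTh1 : 0 < Th1) (hTh2 : 0 < Th2) (hTh3 : 0 < Th3) (hrhos : 0 < rhos)
    (hlam : 0 < lam) (hL : 0 < L) (hd : 0 < d) (hhc : 0 < hc)
    (Qa1 Qa2 QL1 QL2 : ℝ)
    (J : Set ℝ) (hJ : J.OrdConnected) (h0J : (0 : ℝ) ∈ J)
    (x1 x2 x3 : ℝ → ℝ)
    (hsol : ∀ t ∈ J,
      HasDerivAt x1 (fh1 Th1 Th2 rhos hc Qa1 Qa2 QL1 QL2 (x2 t)) t ∧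
      HasDerivAt x2 (fh2 Th3 rhos lam L d (x1 t) (x2 t)) t ∧
      HasDerivAt x3 (Qa1 - QL1 + Qa2 - QL2) t)
    (hinit : fh1 Th1 Th2 rhos hc Qa1 Qa2 QL1 QL2 (x2 0) = 0 ∧
             fh2 Th3 rhos lam L d (x1 0) (x2 0) = 0) :
    ∀ t ∈ J, fh1 Th1 Th2 rhos hc Qa1 Qa2 QL1 QL2 (x2 t) = 0 ∧
             fh2 Th3 rhos lam L d (x1 t) (x2 t) = 0 := by
  intro t ht
  -- abbreviations
  set c : ℝ := (Real.pi / 4) * hc * rhos with hc_def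
  set m : ℝ := lam * L / (2 * d) with hm_def
  set k : ℝ := -(c / Th1 + c / Th2) with hk_def
  set a0 : ℝ := (rhos * Th3)⁻¹ with ha0_def
  set c2 : ℝ := 2 * m / Th3 with hc2_def
  set gg : ℝ → ℝ := fun s => fh1 Th1 Th2 rhos hc Qa1 Qa2 QL1 QL2 (x2 s) with hgg_def
  set hh : ℝ → ℝ := fun s => fh2 Th3 rhos lam L d (x1 s) (x2 s) with hhh_def
  -- derivatives of gg and hh
  have key : ∀ s ∈ J, HasDerivAt gg (k * hh s) s ∧
      HasDerivAt hh (a0 * gg s - c2 * |x2 s| * hh s) s := by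
    intro s hs
    obtain ⟨h1, h2, -⟩ := hsol s hs
    constructor
    · have d1 : HasDerivAt (fun s => (Qa1 - QL1 - c * x2 s) / Th1
          - (Qa2 - QL2 + c * x2 s) / Th2)
          ((0 - c * hh s) / Th1 - (0 + c * hh s) / Th2) s :=
        (((hasDerivAt_const s (Qa1 - QL1)).sub (h2.const_mul c)).div_const Th1).sub
          (((hasDerivAt_const s (Qa2 - QL2)).add (h2.const_mul c)).div_const Th2)
      have : gg = fun s => (Qa1 - QL1 - c * x2 s) / Th1 - (Qa2 - QL2 + c * x2 s) / Th2 := by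
        funext u; simp only [hgg_def, fh1, hc_def]
      rw [this]
      convert d1 using 1
      rw [hk_def]; ring
    · have dca : HasDerivAt (fun s => x2 s * |x2 s|) (2 * |x2 s| * hh s) s :=
        (hasDerivAt_mul_abs (x2 s)).comp s h2
      have d2 : HasDerivAt (fun s => (x1 s / rhos - m * (x2 s * |x2 s|)) / Th3)
          ((gg s / rhos - m * (2 * |x2 s| * hh s)) / Th3) s :=
        ((h1.div_const rhos).sub (dca.const_mul m)).div_const Th3
      have : hh = fun s => (x1 s / rhos - m * (x2 s * |x2 s|)) / Th3 := by
        funext u; simp only [hhh_def, fh2, hm_def]; ring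
      rw [this]
      convert d2 using 1
      have hr : rhos ≠ 0 := ne_of_gt hrhos
      have ht3 : Th3 ≠ 0 := ne_of_gt hTh3
      have hd0 : d ≠ 0 := ne_of_gt hd
      rw [ha0_def, hc2_def]
      simp only [hhh_def, fh2, hm_def]
      field_simp
  -- bound on |x2| over uIcc 0 t
  have hsub : uIcc 0 t ⊆ J := hJ.uIcc_subset h0J ht
  have hcont2 : ContinuousOn x2 (uIcc 0 t) := fun s hs =>
    ((hsol s (hsub hs)).2.1).continuousAt.continuousWithinAt
  obtain ⟨M, hM⟩ := isCompact_uIcc.exists_bound_of_continuousOn hcont2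
  have hM' : ∀ s ∈ uIcc 0 t, |x2 s| ≤ M := by
    intro s hs; simpa [Real.norm_eq_abs] using hM s hs
  have hM0 : 0 ≤ M := le_trans (abs_nonneg _) (hM' 0 left_mem_uIcc)
  -- the vector field
  set v : ℝ → ℝ × ℝ → ℝ × ℝ :=
    fun s p => (k * p.2, a0 * p.1 - (c2 * min |x2 s| M) * p.2) with hv_def
  set Kr : ℝ := |k| + |a0| + |c2| * M with hKr_def
  have hKr0 : 0 ≤ Kr := by positivity
  set K : NNReal := Real.toNNReal Kr with hK_def
  have hKco : (K : ℝ) = Kr := Real.coe_toNNReal Kr hKr0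
  have hlip : ∀ s, LipschitzOnWith K (v s) univ := by
    intro s
    rw [lipschitzOnWith_univ]
    apply LipschitzWith.of_dist_le_mul
    intro p q
    set w : ℝ := c2 * min |x2 s| M with hw_def
    have hw : |w| ≤ |c2| * M := by
      rw [hw_def, abs_mul]
      have h1 : |min |x2 s| M| ≤ M := by
        rw [abs_of_nonneg (le_min (abs_nonneg _) hM0)]
        exact min_le_right _ _
      exact mul_le_mul_of_nonneg_left h1 (abs_nonneg c2)
    have d1 : |p.1 - q.1| ≤ dist p q := by
      rw [Prod.dist_eq, Real.dist_eq, Real.dist_eq]; exact le_max_left _ _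
    have d2 : |p.2 - q.2| ≤ dist p q := by
      rw [Prod.dist_eq, Real.dist_eq, Real.dist_eq]; exact le_max_right _ _
    have hdnn : 0 ≤ dist p q := dist_nonneg
    rw [hKco, Prod.dist_eq, Real.dist_eq, Real.dist_eq]
    apply max_le
    · have : k * p.2 - k * q.2 = k * (p.2 - q.2) := by ring
      simp only [hv_def]
      rw [this, abs_mul]
      calc |k| * |p.2 - q.2| ≤ |k| * dist p q :=
            mul_le_mul_of_nonneg_left d2 (abs_nonneg k)
        _ ≤ Kr * dist p q := by
            apply mul_le_mul_of_nonneg_right _ hdnn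
            rw [hKr_def]
            nlinarith [abs_nonneg a0, mul_nonneg (abs_nonneg c2) hM0]
    · simp only [hv_def]
      have he : (a0 * p.1 - w * p.2) - (a0 * q.1 - w * q.2)
          = a0 * (p.1 - q.1) - w * (p.2 - q.2) := by ring
      rw [← hw_def, he]
      calc |a0 * (p.1 - q.1) - w * (p.2 - q.2)|
          ≤ |a0 * (p.1 - q.1)| + |w * (p.2 - q.2)| := abs_sub _ _
        _ = |a0| * |p.1 - q.1| + |w| * |p.2 - q.2| := by rw [abs_mul, abs_mul]
        _ ≤ Kr * dist p q := by
            have t1 : |a0| * |p.1 - q.1| ≤ |a0| * dist p q :=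
              mul_le_mul_of_nonneg_left d1 (abs_nonneg _)
            have t2 : |w| * |p.2 - q.2| ≤ (|c2| * M) * dist p q :=
              mul_le_mul hw d2 (abs_nonneg _) (mul_nonneg (abs_nonneg _) hM0)
            rw [hKr_def]
            nlinarith [abs_nonneg k, hdnn, t1, t2]
  -- solutions of the auxiliary linear ODE
  set y : ℝ → ℝ × ℝ := fun s => (gg s, hh s) with hy_def
  have hyd : ∀ s ∈ uIcc 0 t, HasDerivAt y (v s (y s)) s := by
    intro s hs
    have hks := key s (hsub hs)
    have : v s (y s) = (k * hh s, a0 * gg s - c2 * |x2 s| * hh s) := by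
      simp only [hv_def, hy_def]
      rw [min_eq_left (hM' s hs)]
    rw [this]
    exact hks.1.prodMk hks.2
  have hzd : ∀ s : ℝ, HasDerivAt (fun _ : ℝ => ((0:ℝ), (0:ℝ))) (v s ((0:ℝ), (0:ℝ))) s := by
    intro s
    have : v s ((0:ℝ), (0:ℝ)) = ((0:ℝ), (0:ℝ)) := by
      simp [hv_def]
    rw [this]
    exact hasDerivAt_const _ _
  have hycont : ContinuousOn y (uIcc 0 t) := fun s hs =>
    (((key s (hsub hs)).1.continuousAt).prodMk ((key s (hsub hs)).2.continuousAt)).continuousWithinAt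
  have hy0 : y 0 = ((0:ℝ), (0:ℝ)) := by
    simp only [hy_def, hgg_def, hhh_def]
    exact Prod.ext hinit.1 hinit.2
  have hyt : y t = ((0:ℝ), (0:ℝ)) := by
    rcases le_or_gt 0 t with h0t | h0t
    · have huicc : uIcc 0 t = Icc 0 t := uIcc_of_le h0t
      have := ODE_solution_unique_of_mem_Icc_right (v := v) (s := fun _ => univ) (K := K)
        (fun s _ => hlip s) (huicc ▸ hycont)
        (fun s hs => (hyd s (huicc ▸ Ico_subset_Icc_self hs)).hasDerivWithinAt)
        (fun _ _ => trivial) continuousOn_const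
        (fun s _ => (hzd s).hasDerivWithinAt) (fun _ _ => trivial) hy0
      exact this (right_mem_Icc.mpr h0t)
    · have huicc : uIcc 0 t = Icc t 0 := uIcc_of_ge h0t.le
      have := ODE_solution_unique_of_mem_Icc_left (v := v) (s := fun _ => univ) (K := K)
        (fun s _ => hlip s) (huicc ▸ hycont)
        (fun s hs => (hyd s (huicc ▸ Ioc_subset_Icc_self hs)).hasDerivWithinAt)
        (fun _ _ => trivial) continuousOn_const
        (fun s _ => (hzd s).hasDerivWithinAt) (fun _ _ => trivial) hy0
      exact this (left_mem_Icc.mpr h0t.le)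
  have h1 : gg t = 0 := congrArg Prod.fst hyt
  have h2 : hh t = 0 := congrArg Prod.snd hyt
  exact ⟨h1, h2⟩
end
end

section
/- Consider the heat subsystem of the two-site system with constant boiler heat inputs and the set I_h := { x_h ∈ ℝ³ : f_h1(x_h) = 0 and f_h2(x_h) = 0 }, where f_h1 and f_h2 are the right-hand sides of the x_h1- and x_h2-equations. Every solution x_h : J → ℝ³ with x_h(0) ∈ I_h is given explicitly by x_h1(t) = x_h1(0), x_h2(t) = x_h2(0), and x_h3(t) = x_h3(0) + (Q'_a1 + Q'_a2 − Q'_L1 − Q'_L2)·t for all t ∈ J. In particular, if the total heat generation Q'_a1 + Q'_a2 differs from the total heat load Q'_L1 + Q'_L2, then the averaged pressure x_h3 drifts linearly in time and no solution starting in I_h converges as t → ∞. -/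
/-!
Heat subsystem of the two-site system with constant boiler heat inputs:
explicit form of the solutions starting on the invariant set
`I_h = {f_h1 = f_h2 = 0}`, and linear drift / non-convergence of the averaged
pressure when total heat generation differs from total heat load.
-/

noncomputable section

open Set Filter

private lemma mul_abs_mono {a b : ℝ} (h : b ≤ a) : b * |b| ≤ a * |a| := by
  rcases le_or_gt 0 a with ha | ha <;> rcases le_or_gt 0 b with hb | hb
  · rw [abs_of_nonneg ha, abs_of_nonneg hb]; nlinarith
  · rw [abs_of_nonneg ha, abs_of_neg hb]; nlinarith
  · nlinarith
  · rw [abs_of_neg ha, abs_of_neg hb]; nlinarith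

private lemma mul_abs_nonneg (a b : ℝ) : 0 ≤ (a - b) * (a * |a| - b * |b|) := by
  rcases le_total b a with h | h
  · have := mul_abs_mono h; nlinarith
  · have := mul_abs_mono h; nlinarith

private lemma mul_abs_lip_aux {a b : ℝ} (h : b ≤ a) :
    a * |a| - b * |b| ≤ (|a| + |b|) * (a - b) := by
  have h1 : |a| - |b| ≤ a - b := by
    have := abs_sub_abs_le_abs_sub a b
    rwa [abs_of_nonneg (by linarith : (0:ℝ) ≤ a - b)] at this
  have h2 : |b| - |a| ≤ a - b := by
    have := abs_sub_abs_le_abs_sub b a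
    rwa [abs_sub_comm, abs_of_nonneg (by linarith : (0:ℝ) ≤ a - b)] at this
  have key : a * (|a| - |b|) ≤ |a| * (a - b) := by
    rcases le_or_gt 0 (|a| - |b|) with hx | hx
    · nlinarith [le_abs_self a, abs_nonneg a]
    · nlinarith [neg_abs_le a, abs_nonneg a]
  nlinarith [key]

private lemma mul_abs_lip (a b : ℝ) :
    (a - b) * (a * |a| - b * |b|) ≤ (|a| + |b|) * (a - b) ^ 2 := by
  rcases le_total b a with h | h
  · have := mul_abs_lip_aux h
    nlinarith [mul_le_mul_of_nonneg_left this (by linarith : (0:ℝ) ≤ a - b)]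
  · have := mul_abs_lip_aux h
    nlinarith [mul_le_mul_of_nonneg_left this (by linarith : (0:ℝ) ≤ b - a)]

private lemma deriv_eq_aux (α k ρ T3 u1 u10 v v0 Av Av0 : ℝ) (hρ : ρ ≠ 0) (hT3 : T3 ≠ 0)
    (h10 : u10 = ρ * (k * (v0 * Av0))) :
    -(α * k / T3 * ((v - v0) * (v * Av - v0 * Av0))) =
      2 * (u1 - u10) ^ 1 * (α * (v0 - v)) / (2 * ρ * T3)
        + α * (2 * (v - v0) ^ 1 * ((u1 / ρ - k * v * Av) / T3)) / 2 := by
  subst h10; field_simp; ring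

private lemma const_of_deriv_zero {J : Set ℝ} (hJ : J.OrdConnected) {f : ℝ → ℝ}
    (hf : ∀ t ∈ J, HasDerivAt f 0 t) {a t : ℝ} (ha : a ∈ J) (ht : t ∈ J) :
    f t = f a := by
  have key : ∀ u v : ℝ, u ∈ J → v ∈ J → u ≤ v → f v = f u := by
    intro u v hu hv huv
    have hsub : Icc u v ⊆ J := hJ.out hu hv
    exact constant_of_has_deriv_right_zero
      (fun s hs => ((hf s (hsub hs)).continuousAt).continuousWithinAt)
      (fun s hs => ((hf s (hsub (Ico_subset_Icc_self hs))).hasDerivWithinAt))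
      v (right_mem_Icc.2 huv)
  rcases le_total a t with h | h
  · exact key a t ha ht h
  · exact (key t a ht ha h).symm

/-- Every solution of the heat subsystem starting in `I_h`
has constant first two components and linearly drifting third component
`x_h3(t) = x_h3(0) + (Q'_a1 + Q'_a2 − Q'_L1 − Q'_L2)·t`; in particular, if the
total heat generation differs from the total heat load, no solution starting
in `I_h` (and defined for all `t ≥ 0`) converges as `t → ∞`. -/
theorem heat_subsystem_explicit_solution_on_manifold
    (Th1 Th2 Th3 rhos lam L d hc : ℝ)
    (hTh1 : 0 < Th1) (hTh2 : 0 < Th2) (hTh3 : 0 < Th3) (hrhos : 0 < rhos)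
    (hlam : 0 < lam) (hL : 0 < L) (hd : 0 < d) (hhc : 0 < hc)
    (Qa1 Qa2 QL1 QL2 : ℝ)
    (J : Set ℝ) (hJ : J.OrdConnected) (h0J : (0 : ℝ) ∈ J)
    (x1 x2 x3 : ℝ → ℝ)
    (hsol : ∀ t ∈ J,
      HasDerivAt x1 (fh1 Th1 Th2 rhos hc Qa1 Qa2 QL1 QL2 (x2 t)) t ∧
      HasDerivAt x2 (fh2 Th3 rhos lam L d (x1 t) (x2 t)) t ∧
      HasDerivAt x3 (Qa1 - QL1 + Qa2 - QL2) t)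
    (hinit : fh1 Th1 Th2 rhos hc Qa1 Qa2 QL1 QL2 (x2 0) = 0 ∧
             fh2 Th3 rhos lam L d (x1 0) (x2 0) = 0) :
    (∀ t ∈ J,
      x1 t = x1 0 ∧ x2 t = x2 0 ∧
      x3 t = x3 0 + (Qa1 + Qa2 - QL1 - QL2) * t) ∧
    (Qa1 + Qa2 ≠ QL1 + QL2 → Set.Ici (0 : ℝ) ⊆ J →
      ¬ ∃ p : ℝ × ℝ × ℝ,
        Filter.Tendsto (fun t => (x1 t, x2 t, x3 t)) Filter.atTop (nhds p)) := by
  obtain ⟨hi1, hi2⟩ := hinit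
  have hπ : (0:ℝ) < Real.pi := Real.pi_pos
  set cc : ℝ := (Real.pi / 4) * hc * rhos with hcc_def
  have hccpos : 0 < cc := by positivity
  set α : ℝ := cc / Th1 + cc / Th2 with hα_def
  have hα : 0 < α := by positivity
  set k : ℝ := lam * L / (2 * d) with hk_def
  have hk : 0 < k := by positivity
  -- fh1 is affine in its argument
  have hfh1 : ∀ y : ℝ, fh1 Th1 Th2 rhos hc Qa1 Qa2 QL1 QL2 y = α * (x2 0 - y) := by
    intro y
    unfold fh1 at hi1 ⊢
    rw [hα_def, hcc_def]
    linear_combination hi1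
  -- initial condition for x1
  have hx10 : x1 0 = rhos * (k * (x2 0 * |x2 0|)) := by
    unfold fh2 at hi2
    rw [div_eq_zero_iff] at hi2
    rcases hi2 with h | h
    · rw [hk_def]; field_simp at h ⊢; linear_combination h
    · exact absurd h hTh3.ne'
  -- Lyapunov function and its derivative along solutions
  set V : ℝ → ℝ := fun s =>
    (x1 s - x1 0)^2 / (2 * rhos * Th3) + α * (x2 s - x2 0)^2 / 2 with hV_def
  set D : ℝ → ℝ := fun s =>
    -((α * k / Th3) * ((x2 s - x2 0) * (x2 s * |x2 s| - x2 0 * |x2 0|))) with hD_def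
  have hVnonneg : ∀ s, 0 ≤ V s := by
    intro s
    have h1 : (0:ℝ) < 2 * rhos * Th3 := by positivity
    exact add_nonneg (div_nonneg (sq_nonneg _) h1.le)
      (div_nonneg (mul_nonneg hα.le (sq_nonneg _)) (by norm_num))
  have hV0 : V 0 = 0 := by simp [hV_def]
  have hDnonpos : ∀ s, D s ≤ 0 := by
    intro s
    have h1 := mul_abs_nonneg (x2 s) (x2 0)
    have h2 : (0:ℝ) ≤ α * k / Th3 := by positivity
    simp only [hD_def, neg_nonpos]
    exact mul_nonneg h2 h1
  have hV : ∀ t ∈ J, HasDerivAt V (D t) t := by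
    intro t ht
    obtain ⟨h1, h2, -⟩ := hsol t ht
    have hd1 := ((h1.sub_const (x1 0)).pow 2).div_const (2 * rhos * Th3)
    have hd2 := (((h2.sub_const (x2 0)).pow 2).const_mul α).div_const 2
    have hsum := hd1.add hd2
    refine hsum.congr_deriv ?_
    symm
    rw [hfh1 (x2 t)]
    unfold fh2
    simp only [hD_def]
    push_cast
    linear_combination deriv_eq_aux α (lam * L / (2 * d)) rhos Th3 (x1 t) (x1 0)
      (x2 t) (x2 0) |x2 t| |x2 0| hrhos.ne' hTh3.ne' hx10
  -- V vanishes on J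
  have hVzero : ∀ t ∈ J, V t = 0 := by
    intro t ht
    rcases le_total 0 t with h0t | ht0
    · -- forward in time: V is nonincreasing
      have hsub : Icc (0:ℝ) t ⊆ J := hJ.out h0J ht
      have hanti : AntitoneOn V (Icc 0 t) := by
        apply antitoneOn_of_deriv_nonpos (convex_Icc 0 t)
        · exact fun s hs => (hV s (hsub hs)).continuousAt.continuousWithinAt
        · exact fun s hs =>
            ((hV s (hsub (interior_subset hs))).differentiableAt).differentiableWithinAt
        · intro s hs
          rw [(hV s (hsub (interior_subset hs))).deriv]
          exact hDnonpos s
      have hle := hanti (left_mem_Icc.2 h0t) (right_mem_Icc.2 h0t) h0t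
      rw [hV0] at hle
      exact le_antisymm hle (hVnonneg t)
    · -- backward in time: Gronwall with exponential weight
      have hsub : Icc t 0 ⊆ J := hJ.out ht h0J
      obtain ⟨M, hM⟩ : ∃ M, ∀ s ∈ Icc t 0, |x2 s| ≤ M := by
        obtain ⟨M, hM⟩ := (isCompact_Icc (a := t) (b := 0)).exists_bound_of_continuousOn
          (fun s hs => ((hsol s (hsub hs)).2.1.continuousAt).continuousWithinAt)
        exact ⟨M, fun s hs => by simpa [Real.norm_eq_abs] using hM s hs⟩
      have hM0 : 0 ≤ M := le_trans (abs_nonneg _) (hM 0 (right_mem_Icc.2 ht0))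
      set K : ℝ := (α * k / Th3) * ((M + |x2 0|) * (2 / α)) with hK_def
      have hKnn : 0 ≤ K := by positivity
      have hDK : ∀ s ∈ Icc t 0, -(K * V s) ≤ D s := by
        intro s hs
        have hlip := mul_abs_lip (x2 s) (x2 0)
        have h1 : (|x2 s| + |x2 0|) * (x2 s - x2 0)^2 ≤ (M + |x2 0|) * (x2 s - x2 0)^2 :=
          mul_le_mul_of_nonneg_right (by linarith [hM s hs]) (sq_nonneg _)
        have h2 : (x2 s - x2 0)^2 ≤ 2 / α * V s := by
          have hρ : (0:ℝ) ≤ (x1 s - x1 0)^2 / (2 * rhos * Th3) := by positivity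
          have he : 2 / α * V s
              = 2 / α * ((x1 s - x1 0)^2 / (2 * rhos * Th3)) + (x2 s - x2 0)^2 := by
            simp only [hV_def]
            field_simp
          linarith [he, mul_nonneg (by positivity : (0:ℝ) ≤ 2/α) hρ]
        have h3 : (x2 s - x2 0) * (x2 s * |x2 s| - x2 0 * |x2 0|)
            ≤ (M + |x2 0|) * (2 / α * V s) := by
          calc (x2 s - x2 0) * (x2 s * |x2 s| - x2 0 * |x2 0|)
              ≤ (M + |x2 0|) * (x2 s - x2 0)^2 := le_trans hlip h1
            _ ≤ (M + |x2 0|) * (2 / α * V s) :=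
              mul_le_mul_of_nonneg_left h2 (by positivity)
        have h4 : (α * k / Th3) * ((x2 s - x2 0) * (x2 s * |x2 s| - x2 0 * |x2 0|))
            ≤ K * V s := by
          calc _ ≤ (α * k / Th3) * ((M + |x2 0|) * (2 / α * V s)) :=
                mul_le_mul_of_nonneg_left h3 (by positivity)
            _ = K * V s := by rw [hK_def]; ring
        simp only [hD_def]
        linarith
      set W : ℝ → ℝ := fun s => Real.exp (K * s) * V s with hW_def
      have hWd : ∀ s ∈ Icc t 0, HasDerivAt W
          (K * Real.exp (K * s) * V s + Real.exp (K * s) * D s) s := by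
        intro s hs
        have he : HasDerivAt (fun u : ℝ => Real.exp (K * u)) (Real.exp (K * s) * K) s := by
          simpa using ((hasDerivAt_id s).const_mul K).exp
        have := he.mul (hV s (hsub hs))
        exact this.congr_deriv (by ring)
      have hmono : MonotoneOn W (Icc t 0) := by
        apply monotoneOn_of_deriv_nonneg (convex_Icc t 0)
        · exact fun s hs => (hWd s hs).continuousAt.continuousWithinAt
        · exact fun s hs =>
            ((hWd s (interior_subset hs)).differentiableAt).differentiableWithinAt
        · intro s hs
          rw [(hWd s (interior_subset hs)).deriv]
          have h5 := hDK s (interior_subset hs)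
          have h6 : 0 ≤ K * V s + D s := by linarith
          calc (0:ℝ) ≤ Real.exp (K * s) * (K * V s + D s) :=
                mul_nonneg (Real.exp_pos _).le h6
            _ = K * Real.exp (K * s) * V s + Real.exp (K * s) * D s := by ring
      have hle := hmono (left_mem_Icc.2 ht0) (right_mem_Icc.2 ht0) ht0
      have hW0 : W 0 = 0 := by simp [hW_def, hV0]
      rw [hW0] at hle
      simp only [hW_def] at hle
      have hexp : 0 < Real.exp (K * t) := Real.exp_pos _
      have hVt : V t ≤ 0 := by
        have h' : Real.exp (K * t) * V t ≤ Real.exp (K * t) * 0 := by rwa [mul_zero]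
        exact le_of_mul_le_mul_left h' hexp
      exact le_antisymm hVt (hVnonneg t)
  -- first two components are constant
  have hx12 : ∀ t ∈ J, x1 t = x1 0 ∧ x2 t = x2 0 := by
    intro t ht
    have h := hVzero t ht
    simp only [hV_def] at h
    have h1 : (0:ℝ) < 2 * rhos * Th3 := by positivity
    have hA : (0:ℝ) ≤ (x1 t - x1 0)^2 / (2 * rhos * Th3) := by positivity
    have hB : (0:ℝ) ≤ α * (x2 t - x2 0)^2 / 2 := by positivity
    have hA0 : (x1 t - x1 0)^2 / (2 * rhos * Th3) = 0 := by linarith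
    have hB0 : α * (x2 t - x2 0)^2 / 2 = 0 := by linarith
    constructor
    · rcases div_eq_zero_iff.mp hA0 with hnum | hden
      · have := (pow_eq_zero_iff two_ne_zero).mp hnum
        linarith [sub_eq_zero.mp this]
      · exact absurd hden h1.ne'
    · rcases div_eq_zero_iff.mp hB0 with hnum | hden
      · rcases mul_eq_zero.mp hnum with h' | h'
        · exact absurd h' hα.ne'
        · have := (pow_eq_zero_iff two_ne_zero).mp h'
          linarith [sub_eq_zero.mp this]
      · norm_num at hden
  -- third component drifts linearly
  have hx3 : ∀ t ∈ J, x3 t = x3 0 + (Qa1 + Qa2 - QL1 - QL2) * t := by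
    intro t ht
    have hg : ∀ s ∈ J,
        HasDerivAt (fun u => x3 u - (Qa1 - QL1 + Qa2 - QL2) * u) 0 s := by
      intro s hs
      have h3 := (hsol s hs).2.2
      have hid : HasDerivAt (fun u : ℝ => (Qa1 - QL1 + Qa2 - QL2) * u)
          (Qa1 - QL1 + Qa2 - QL2) s := by
        simpa using (hasDerivAt_id s).const_mul (Qa1 - QL1 + Qa2 - QL2)
      exact (h3.sub hid).congr_deriv (sub_self _)
    have hconst := const_of_deriv_zero hJ hg h0J ht
    linear_combination hconst
  refine ⟨fun t ht => ⟨(hx12 t ht).1, (hx12 t ht).2, hx3 t ht⟩, ?_⟩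
  intro hne hIci hex
  obtain ⟨p, hp⟩ := hex
  have hq : Qa1 + Qa2 - QL1 - QL2 ≠ 0 := fun h => hne (by linarith)
  have hx3t : Tendsto (fun t => x3 t) atTop (nhds p.2.2) := by
    have h1 : Tendsto (fun t => (x2 t, x3 t)) atTop (nhds p.2) :=
      (continuous_snd.tendsto p).comp hp
    exact (continuous_snd.tendsto p.2).comp h1
  have heq : (fun t => x3 t) =ᶠ[atTop]
      fun t => x3 0 + (Qa1 + Qa2 - QL1 - QL2) * t := by
    filter_upwards [eventually_ge_atTop (0:ℝ)] with t ht
    exact hx3 t (hIci ht)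
  have hlin : Tendsto (fun t : ℝ => x3 0 + (Qa1 + Qa2 - QL1 - QL2) * t) atTop
      (nhds p.2.2) := hx3t.congr' heq
  have hT : Tendsto (fun t : ℝ => t) atTop
      (nhds ((p.2.2 - x3 0) / (Qa1 + Qa2 - QL1 - QL2))) := by
    have h2 := (hlin.sub_const (x3 0)).div_const (Qa1 + Qa2 - QL1 - QL2)
    refine h2.congr fun t => ?_
    rw [add_sub_cancel_left, mul_div_cancel_left₀ _ hq]
  exact not_tendsto_nhds_of_tendsto_atTop tendsto_id _ hT
end
end

section
/- For the heat subsystem of the two-site system with constant boiler heat inputs, the set I_h := { x_h ∈ ℝ³ : f_h1(x_h) = 0 and f_h2(x_h) = 0 } (f_h1, f_h2 the right-hand sides of the x_h1- and x_h2-equations) is exactly the one-dimensional line { (x_h1*, x_h2*, a) : a ∈ ℝ }, where x_h2* = ((Q'_a1 − Q'_L1)/T_h1 − (Q'_a2 − Q'_L2)/T_h2) / ( c·(1/T_h1 + 1/T_h2) ) with c := (π/4)·h_c·ρ_s, and x_h1* = ρ_s·(λL/(2d))·x_h2*·|x_h2*|. Moreover, the set of equilibrium points of the heat subsystem is empty if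 Q'_a1 + Q'_a2 ≠ Q'_L1 + Q'_L2, and equals the whole line I_h if Q'_a1 + Q'_a2 = Q'_L1 + Q'_L2; in particular the heat subsystem never possesses an isolated equilibrium point. -/
/-!
Heat subsystem of the two-site system: the set `I_h = {f_h1 = f_h2 = 0}` is a
one-dimensional line, the equilibrium set is empty or the whole line depending
on the balance of heat generation and load, and the subsystem never has an
isolated equilibrium point.
-/

noncomputable section

/-- Structure of `I_h` and of the equilibrium set of the heat
subsystem. -/
theorem heat_subsystem_manifold_structure
    (Th1 Th2 Th3 rhos lam L d hc : ℝ)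
    (hTh1 : 0 < Th1) (hTh2 : 0 < Th2) (hTh3 : 0 < Th3) (hrhos : 0 < rhos)
    (hlam : 0 < lam) (hL : 0 < L) (hd : 0 < d) (hhc : 0 < hc)
    (Qa1 Qa2 QL1 QL2 : ℝ)
    -- the constant `c = (π/4)·h_c·ρ_s` and the distinguished point
    (c x2star x1star : ℝ)
    (hc_def : c = (Real.pi / 4) * hc * rhos)
    (hx2star : x2star =
      ((Qa1 - QL1) / Th1 - (Qa2 - QL2) / Th2) / (c * (1 / Th1 + 1 / Th2)))
    (hx1star : x1star = rhos * (lam * L / (2 * d)) * x2star * |x2star|)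
    -- the invariant set `I_h` and the equilibrium set `Eq`
    (Ih Eq : Set (ℝ × ℝ × ℝ))
    (hIh : Ih = { x : ℝ × ℝ × ℝ |
      (Qa1 - QL1 - c * x.2.1) / Th1 - (Qa2 - QL2 + c * x.2.1) / Th2 = 0 ∧
      (x.1 / rhos - (lam * L / (2 * d)) * x.2.1 * |x.2.1|) / Th3 = 0 })
    (hEq : Eq = { x : ℝ × ℝ × ℝ |
      (Qa1 - QL1 - c * x.2.1) / Th1 - (Qa2 - QL2 + c * x.2.1) / Th2 = 0 ∧
      (x.1 / rhos - (lam * L / (2 * d)) * x.2.1 * |x.2.1|) / Th3 = 0 ∧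
      Qa1 - QL1 + Qa2 - QL2 = 0 }) :
    Ih = { x : ℝ × ℝ × ℝ | ∃ a : ℝ, x = (x1star, x2star, a) } ∧
    (Qa1 + Qa2 ≠ QL1 + QL2 → Eq = ∅) ∧
    (Qa1 + Qa2 = QL1 + QL2 → Eq = Ih) ∧
    (∀ p ∈ Eq, ∀ ε > (0 : ℝ), ∃ q ∈ Eq, q ≠ p ∧ dist q p < ε) := by
  have hpi := Real.pi_pos
  have hc0 : 0 < c := by rw [hc_def]; positivity
  have hD : 0 < c * (1 / Th1 + 1 / Th2) := by positivity
  have key : ∀ t : ℝ,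
      ((Qa1 - QL1 - c * t) / Th1 - (Qa2 - QL2 + c * t) / Th2 = 0) ↔ t = x2star := by
    intro t
    rw [hx2star, eq_div_iff hD.ne']
    constructor
    · intro h
      field_simp at h ⊢
      nlinarith [mul_pos hTh1 hTh2]
    · intro h
      field_simp at h ⊢
      nlinarith [mul_pos hTh1 hTh2]
  have key2 : ∀ s t : ℝ,
      ((s / rhos - (lam * L / (2 * d)) * t * |t|) / Th3 = 0) ↔
        s = rhos * (lam * L / (2 * d)) * t * |t| := by
    intro s t
    rw [div_eq_zero_iff]
    constructor
    · rintro (h | h)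
      · rw [sub_eq_zero] at h
        field_simp at h
        field_simp
        linear_combination h
      · exact absurd h hTh3.ne'
    · intro h
      left
      rw [sub_eq_zero, h]
      field_simp
  have hIhLine : Ih = { x : ℝ × ℝ × ℝ | ∃ a : ℝ, x = (x1star, x2star, a) } := by
    rw [hIh]
    ext ⟨x1, x2, x3⟩
    simp only [Set.mem_setOf_eq, Prod.mk.injEq]
    constructor
    · rintro ⟨h1, h2⟩
      have h2' : x2 = x2star := (key x2).mp h1
      subst h2'
      have h1' : x1 = x1star := by
        rw [hx1star]; exact (key2 x1 x2).mp h2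
      exact ⟨x3, h1', rfl, rfl⟩
    · rintro ⟨a, h1, h2, h3⟩
      rw [h1, h2]
      refine ⟨(key x2star).mpr rfl, (key2 x1star x2star).mpr ?_⟩
      rw [hx1star]
  refine ⟨hIhLine, ?_, ?_, ?_⟩
  · intro hne
    rw [hEq]
    ext x
    simp only [Set.mem_setOf_eq, Set.mem_empty_iff_false, iff_false]
    rintro ⟨-, -, h3⟩
    exact hne (by linarith)
  · intro heq
    rw [hEq, hIh]
    ext x
    simp only [Set.mem_setOf_eq]
    constructor
    · rintro ⟨h1, h2, -⟩; exact ⟨h1, h2⟩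
    · rintro ⟨h1, h2⟩; exact ⟨h1, h2, by linarith⟩
  · intro p hp ε hε
    rw [hEq] at hp
    obtain ⟨h1, h2, h3⟩ := hp
    refine ⟨(p.1, p.2.1, p.2.2 + ε / 2), ?_, ?_, ?_⟩
    · rw [hEq]; exact ⟨h1, h2, h3⟩
    · intro h
      have := congrArg (fun x : ℝ × ℝ × ℝ => x.2.2) h
      simp at this
      linarith
    · have hp' : p = (p.1, p.2.1, p.2.2) := rfl
      rw [hp', Prod.dist_eq, Prod.dist_eq, dist_self, dist_self]
      have h4 : dist (p.2.2 + ε / 2) p.2.2 = ε / 2 := by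
        rw [Real.dist_eq, add_sub_cancel_left, abs_of_pos (by linarith)]
      rw [h4, max_eq_right (le_max_left _ _),
        max_eq_right (by linarith : (0:ℝ) ≤ ε / 2)]
      linarith
end
end

section
/- Let F = (F1, F2, F3, F4) : ℝ⁴ → ℝ⁴ be locally Lipschitz and independent of the fourth coordinate, i.e. F(η1, η2, η3, η4) = F(η1, η2, η3, η4') for all η1, η2, η3, η4, η4' ∈ ℝ, and define I := { η ∈ ℝ⁴ : F1(η) = F2(η) = F3(η) = 0 }. Then I is invariant under the flow of η̇ = F(η): every solution η : J → ℝ⁴ defined on an interval J containing 0 with η(0) ∈ I satisfies η(t) ∈ I for all t ∈ J; moreover η1(t) = η1(0), η2(t) = η2(0), η3(t) = η3(0), and η4(t) = η4(0) + F4(η(0))·t for all t ∈ J. -/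
/-!
Abstract form of Theorem 1 of the paper: for a locally Lipschitz vector field
`F` on ℝ⁴ that is independent of the fourth coordinate, the set
`I = {F₁ = F₂ = F₃ = 0}` is invariant under the flow of `η̇ = F(η)`, and on
`I` the solution is explicit (constant in the first three coordinates, affine
in the fourth).
-/

/-- Invariance of `I = {F₁ = F₂ = F₃ = 0}` for a locally
Lipschitz `F : ℝ⁴ → ℝ⁴` independent of the fourth coordinate, together with
the explicit form of solutions starting on `I`. -/
theorem invariant_manifold_of_zero_dynamics
    (F : (Fin 4 → ℝ) → (Fin 4 → ℝ))
    (hLip : LocallyLipschitz F)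
    (hind : ∀ (η : Fin 4 → ℝ) (d' : ℝ), F (Function.update η 3 d') = F η)
    (J : Set ℝ) (hJ : J.OrdConnected) (h0J : (0 : ℝ) ∈ J)
    (η : ℝ → (Fin 4 → ℝ))
    (hsol : ∀ t ∈ J, HasDerivAt η (F (η t)) t)
    (hinit : F (η 0) 0 = 0 ∧ F (η 0) 1 = 0 ∧ F (η 0) 2 = 0) :
    ∀ t ∈ J,
      (F (η t) 0 = 0 ∧ F (η t) 1 = 0 ∧ F (η t) 2 = 0) ∧
      η t 0 = η 0 0 ∧ η t 1 = η 0 1 ∧ η t 2 = η 0 2 ∧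
      η t 3 = η 0 3 + F (η 0) 3 * t := by
  obtain ⟨h1, h2, h3⟩ := hinit
  set c : ℝ := F (η 0) 3 with hc
  set γ : ℝ → (Fin 4 → ℝ) :=
    fun u => Function.update (η 0) 3 (η 0 3 + c * u) with hγdef
  have hγF : ∀ u, F (γ u) = F (η 0) := fun u => hind _ _
  have hγ0 : ∀ u, γ u 0 = η 0 0 := fun u => Function.update_of_ne (by decide) _ _
  have hγ1 : ∀ u, γ u 1 = η 0 1 := fun u => Function.update_of_ne (by decide) _ _
  have hγ2 : ∀ u, γ u 2 = η 0 2 := fun u => Function.update_of_ne (by decide) _ _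
  have hγ3 : ∀ u, γ u 3 = η 0 3 + c * u := fun u => Function.update_self _ _ _
  have hγd : ∀ u, HasDerivAt γ (F (γ u)) u := by
    intro u
    rw [hγF]
    rw [hasDerivAt_pi]
    intro i
    fin_cases i
    · show HasDerivAt (fun t => γ t 0) (F (η 0) 0) u
      rw [show (fun t => γ t 0) = fun _ => η 0 0 from funext hγ0]
      rw [h1]; exact hasDerivAt_const u _
    · show HasDerivAt (fun t => γ t 1) (F (η 0) 1) u
      rw [show (fun t => γ t 1) = fun _ => η 0 1 from funext hγ1]
      rw [h2]; exact hasDerivAt_const u _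
    · show HasDerivAt (fun t => γ t 2) (F (η 0) 2) u
      rw [show (fun t => γ t 2) = fun _ => η 0 2 from funext hγ2]
      rw [h3]; exact hasDerivAt_const u _
    · show HasDerivAt (fun t => γ t 3) (F (η 0) 3) u
      rw [show (fun t => γ t 3) = fun t => η 0 3 + c * t from funext hγ3]
      simpa using ((hasDerivAt_id u).const_mul c).const_add (η 0 3)
  have hγcont : Continuous γ :=
    continuous_iff_continuousAt.2 fun u => (hγd u).continuousAt
  have hγzero : γ 0 = η 0 := by
    rw [hγdef]; simp
  -- the agreement set on the subtype is clopen and nonempty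
  have hpre : PreconnectedSpace J := Subtype.preconnectedSpace hJ.isPreconnected
  set S : Set J := {x : J | η ↑x = γ ↑x} with hSdef
  have hSclosed : IsClosed S := by
    apply isClosed_eq
    · exact continuous_iff_continuousAt.2 fun x =>
        ((hsol _ x.2).continuousAt).comp continuous_subtype_val.continuousAt
    · exact hγcont.comp continuous_subtype_val
  have hSopen : IsOpen S := by
    rw [isOpen_iff_mem_nhds]
    rintro x0 hx0
    obtain ⟨K, sK, hsK, hlip⟩ := hLip (η ↑x0)
    have hsKγ : sK ∈ nhds (γ ↑x0) := by rwa [← hx0]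
    have hη_pre : η ⁻¹' sK ∈ nhds (↑x0 : ℝ) :=
      (hsol _ x0.2).continuousAt hsK
    have hγ_pre : γ ⁻¹' sK ∈ nhds (↑x0 : ℝ) := hγcont.continuousAt hsKγ
    obtain ⟨δ, hδpos, hδ⟩ := Metric.mem_nhds_iff.1 (Filter.inter_mem hη_pre hγ_pre)
    have claim : ∀ u ∈ J, u ∈ Metric.ball (↑x0 : ℝ) δ → η u = γ u := by
      intro u huJ hub
      have hball : ∀ w, w ∈ Set.uIcc (↑x0 : ℝ) u → w ∈ Metric.ball (↑x0 : ℝ) δ := by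
        intro w hw
        rw [Metric.mem_ball] at hub ⊢
        rw [Set.uIcc_eq_union] at hw
        rw [Real.dist_eq] at hub ⊢
        rcases hw with hw | hw
        · rcases hw with ⟨hl, hr⟩
          have : |w - ↑x0| ≤ |u - ↑x0| := by
            rw [abs_of_nonneg (by linarith), abs_of_nonneg (by linarith)]; linarith
          linarith [abs_nonneg (w - (↑x0 : ℝ))]
        · rcases hw with ⟨hl, hr⟩
          have : |w - ↑x0| ≤ |u - ↑x0| := by
            rw [abs_of_nonpos (by linarith), abs_of_nonpos (by linarith)]; linarith
          linarith [abs_nonneg (w - (↑x0 : ℝ))]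
      have hsubJ : Set.uIcc (↑x0 : ℝ) u ⊆ J := hJ.uIcc_subset x0.2 huJ
      rcases le_total (↑x0 : ℝ) u with hle | hle
      · have huIcc : Set.uIcc (↑x0 : ℝ) u = Set.Icc (↑x0 : ℝ) u := Set.uIcc_of_le hle
        have := ODE_solution_unique_of_mem_Icc_right (v := fun _ => F)
          (s := fun _ => sK) (K := K) (f := η) (g := γ) (a := (↑x0 : ℝ)) (b := u)
          (fun _ _ => hlip)
          (fun w hw => ((hsol w (hsubJ (huIcc ▸ hw))).continuousAt).continuousWithinAt)
          (fun w hw => (hsol w (hsubJ (huIcc ▸ Set.Ico_subset_Icc_self hw))).hasDerivWithinAt)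
          (fun w hw => (hδ (hball w (huIcc ▸ Set.Ico_subset_Icc_self hw))).1)
          (hγcont.continuousOn)
          (fun w _ => (hγd w).hasDerivWithinAt)
          (fun w hw => (hδ (hball w (huIcc ▸ Set.Ico_subset_Icc_self hw))).2)
          hx0
        exact this ⟨hle, le_rfl⟩
      · have huIcc : Set.uIcc (↑x0 : ℝ) u = Set.Icc u (↑x0 : ℝ) := Set.uIcc_of_ge hle
        have := ODE_solution_unique_of_mem_Icc_left (v := fun _ => F)
          (s := fun _ => sK) (K := K) (f := η) (g := γ) (a := u) (b := (↑x0 : ℝ))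
          (fun _ _ => hlip)
          (fun w hw => ((hsol w (hsubJ (huIcc ▸ hw))).continuousAt).continuousWithinAt)
          (fun w hw => (hsol w (hsubJ (huIcc ▸ Set.Ioc_subset_Icc_self hw))).hasDerivWithinAt)
          (fun w hw => (hδ (hball w (huIcc ▸ Set.Ioc_subset_Icc_self hw))).1)
          (hγcont.continuousOn)
          (fun w _ => (hγd w).hasDerivWithinAt)
          (fun w hw => (hδ (hball w (huIcc ▸ Set.Ioc_subset_Icc_self hw))).2)
          hx0
        exact this ⟨le_rfl, hle⟩
    have hball_nhds : (Subtype.val ⁻¹' Metric.ball (↑x0 : ℝ) δ : Set J) ∈ nhds x0 :=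
      continuous_subtype_val.continuousAt (Metric.ball_mem_nhds _ hδpos)
    exact Filter.mem_of_superset hball_nhds fun x hx => claim ↑x x.2 hx
  have hSuniv : S = Set.univ := by
    apply IsClopen.eq_univ ⟨hSclosed, hSopen⟩
    exact ⟨⟨0, h0J⟩, by simp [hSdef, hγzero]⟩
  have key : ∀ u ∈ J, η u = γ u := by
    intro u hu
    have : (⟨u, hu⟩ : J) ∈ S := hSuniv ▸ Set.mem_univ _
    exact this
  intro t ht
  have he : η t = γ t := key t ht
  refine ⟨?_, ?_, ?_, ?_, ?_⟩
  · rw [he, hγF]; exact ⟨h1, h2, h3⟩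
  · rw [he]; exact hγ0 t
  · rw [he]; exact hγ1 t
  · rw [he]; exact hγ2 t
  · rw [he]; exact hγ3 t
end
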